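/- Let n ≥ 3 be odd and m ≥ n. The m-linear SO(n)-invariant equal to the sum of all m-linear monomials in the variables z⁽ⁱ⁾, x_r⁽ⁱ⁾, y_r⁽ⁱ⁾ in which for each r ≥ 1 the letters x_r, y_r occur a strictly positive even number of times in alternating order, and the z's fill the remaining (even number of) slots, is indecomposable in the invariant ring R^{SO(n)} over an algebraically closed field of characteristic 2. -/

import Mathlib

open MvPolynomial

/-- The standard quadratic form `x₁y₁ + ⋯ + x_ν y_ν (+ z²)` on `n`-space. -/
def stdQ (F : Type*) [CommRing F] (n : ℕ) (v : Fin n → F) : F :=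
  (∑ r : Fin (n/2), v ⟨2*r.1, by have := r.2; omega⟩ * v ⟨2*r.1+1, by have := r.2; omega⟩)
  + if h : n % 2 = 1 then (v ⟨n-1, by omega⟩)^2 else 0


/-- The action of a matrix `g` on polynomials in the coordinates of `m` vectors,
substituting `v ↦ g v` in each vector variable. -/
noncomputable def substAct {k : Type*} [CommSemiring k] {m n : ℕ}
    (g : Matrix (Fin n) (Fin n) k) :
    MvPolynomial (Fin m × Fin n) k →ₐ[k] MvPolynomial (Fin m × Fin n) k :=
  MvPolynomial.aeval fun ic => ∑ c : Fin n, MvPolynomial.C (g ic.2 c) * MvPolynomial.X (ic.1, c)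


/-- The exponent vector of the `m`-linear monomial in which vector `i` contributes
its coordinate `c i`. -/
noncomputable def expOf {m n : ℕ} (c : Fin m → Fin n) : (Fin m × Fin n) →₀ ℕ :=
  ∑ i : Fin m, Finsupp.single (i, c i) 1


/-- The number `m_r` of occurrences of letters from group `r` (the pair `x_r, y_r`,
coordinates `2r, 2r+1`; for `n` odd, group `n/2` is the letter `z`). -/
def cnt {m n : ℕ} (c : Fin m → Fin n) (r : ℕ) : ℕ :=
  (Finset.univ.filter fun i : Fin m => (c i).1 / 2 = r).card


/-- In the monomial encoded by `c`, the letters `x_r` (coordinate `2r`) and `y_r`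
(coordinate `2r+1`) occur in alternating order. -/
def Alt {m n : ℕ} (c : Fin m → Fin n) (r : ℕ) : Prop :=
  ∀ i j : Fin m, i < j → (c i).1 / 2 = r → (c j).1 / 2 = r →
    (∀ l : Fin m, i < l → l < j → (c l).1 / 2 ≠ r) → c i ≠ c j


/-- Membership in the orthogonal group `O(n)`: an invertible matrix preserving `stdQ`. -/
def inO {k : Type*} [CommRing k] {n : ℕ} (g : Matrix (Fin n) (Fin n) k) : Prop :=
  IsUnit g.det ∧ ∀ v : Fin n → k, stdQ k n (g.mulVec v) = stdQ k n v



noncomputable section GHAux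
variable {k : Type*} [Field k] {m n : ℕ}

/-- squarefree exponent vector supported on slots in `A` with letter `c i` at slot `i` -/
def myE (A : Finset (Fin m)) (c : Fin m → Fin n) : (Fin m × Fin n) →₀ ℕ :=
  ∑ i ∈ A, Finsupp.single (i, c i) 1

/-- slot-indicator exponent vector in the `t` variables -/
def tauF (A : Finset (Fin m)) : Fin m →₀ ℕ := ∑ i ∈ A, Finsupp.single i 1

/-- total degree per slot -/
def sigW (e : (Fin m × Fin n) →₀ ℕ) : Fin m →₀ ℕ := e.sum fun ic t => Finsupp.single ic.1 t

lemma myE_apply (A : Finset (Fin m)) (c : Fin m → Fin n) (j : Fin m) (b : Fin n) :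
    myE A c (j, b) = if j ∈ A ∧ c j = b then 1 else 0 := by
  classical
  rw [myE, Finset.sum_apply']
  rw [Finset.sum_congr rfl (fun i _ => Finsupp.single_apply)]
  by_cases hj : j ∈ A ∧ c j = b
  · rw [if_pos hj, Finset.sum_eq_single_of_mem j hj.1]
    · simp [hj.2]
    · intro i _ hij
      rw [if_neg]
      intro hx
      injection hx with h1 h2
      exact hij h1
  · rw [if_neg hj, Finset.sum_eq_zero]
    intro i hi
    rw [if_neg]
    intro hx
    injection hx with h1 h2
    subst h1
    exact hj ⟨hi, h2⟩

lemma tauF_apply (A : Finset (Fin m)) (j : Fin m) :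
    tauF A j = if j ∈ A then 1 else 0 := by
  classical
  rw [tauF, Finset.sum_apply']
  rw [Finset.sum_congr rfl (fun i _ => Finsupp.single_apply)]
  by_cases hj : j ∈ A
  · rw [if_pos hj, Finset.sum_eq_single_of_mem j hj]
    · simp
    · intro i _ hij; exact if_neg hij
  · rw [if_neg hj, Finset.sum_eq_zero]
    intro i hi
    exact if_neg (by rintro rfl; exact hj hi)

lemma myE_congr {A : Finset (Fin m)} {c c' : Fin m → Fin n}
    (h : ∀ i ∈ A, c i = c' i) : myE A c = myE A c' :=
  Finset.sum_congr rfl fun i hi => by rw [h i hi]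

lemma myE_inj {A : Finset (Fin m)} {c c' : Fin m → Fin n}
    (h : myE A c = myE A c') : ∀ i ∈ A, c i = c' i := by
  intro i hi
  have h1 : myE A c' (i, c i) = 1 := by
    rw [← h, myE_apply, if_pos ⟨hi, rfl⟩]
  rw [myE_apply] at h1
  by_cases hc : c' i = c i
  · exact hc.symm
  · rw [if_neg (fun hx => hc hx.2)] at h1; exact absurd h1.symm one_ne_zero

lemma myE_prod {A : Finset (Fin m)} {c : Fin m → Fin n} {M : Type*} [CommMonoid M]
    (h : Fin m × Fin n → ℕ → M) (h0 : ∀ x, h x 0 = 1)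
    (hadd : ∀ x s t, h x (s + t) = h x s * h x t) :
    (myE A c).prod h = ∏ i ∈ A, h (i, c i) 1 := by
  classical
  induction A using Finset.induction with
  | empty => simp [myE]
  | @insert j A hj ih =>
    rw [myE, Finset.sum_insert hj, Finsupp.prod_add_index' h0 hadd,
      Finsupp.prod_single_index (h0 _), ← myE, ih, Finset.prod_insert hj]

lemma sigW_add (e f : (Fin m × Fin n) →₀ ℕ) : sigW (e + f) = sigW e + sigW f :=
  Finsupp.sum_add_index' (fun ic => Finsupp.single_zero _) (fun ic s t => Finsupp.single_add _ _ _)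

lemma sigW_myE (A : Finset (Fin m)) (c : Fin m → Fin n) : sigW (myE A c) = tauF A := by
  classical
  induction A using Finset.induction with
  | empty => simp [myE, tauF, sigW]
  | @insert j A hj ih =>
    rw [myE, tauF, Finset.sum_insert hj, Finset.sum_insert hj, ← myE, ← tauF, sigW_add, ih]
    congr 1
    rw [sigW, Finsupp.sum_single_index (by simp)]

lemma sigW_apply (e : (Fin m × Fin n) →₀ ℕ) (j : Fin m) :
    sigW e j = ∑ b : Fin n, e (j, b) := by
  classical
  rw [sigW, Finsupp.sum, Finset.sum_apply']
  rw [Finset.sum_congr rfl (fun ic _ => Finsupp.single_apply)]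
  rw [Finset.sum_subset (Finset.subset_univ e.support)
    (by intro x _ hx
        rw [Finsupp.notMem_support_iff.1 hx]
        simp)]
  rw [Fintype.sum_prod_type]
  rw [Finset.sum_comm]
  simp


/-- classification: slot-degree `tauF A` forces squarefree shape -/
lemma exists_c_of_sigW (e : (Fin m × Fin n) →₀ ℕ) (A : Finset (Fin m))
    (h : sigW e = tauF A) (hn : 0 < n) : ∃ c : Fin m → Fin n, e = myE A c := by
  classical
  have key : ∀ j : Fin m, j ∈ A → ∃ b : Fin n, e (j, b) = 1 ∧ ∀ b', b' ≠ b → e (j, b') = 0 := by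
    intro j hj
    have h1 : ∑ b : Fin n, e (j, b) = 1 := by
      rw [← sigW_apply, h, tauF_apply, if_pos hj]
    have h2 : ∃ b ∈ Finset.univ, e (j, b) ≠ 0 := by
      by_contra hb
      push_neg at hb
      rw [Finset.sum_eq_zero (fun b _ => hb b (Finset.mem_univ b))] at h1
      exact one_ne_zero h1.symm
    obtain ⟨b, -, hb⟩ := h2
    have hle : e (j, b) ≤ 1 := h1 ▸ Finset.single_le_sum (f := fun b => e (j, b)) (fun _ _ => Nat.zero_le _) (Finset.mem_univ b)
    have heb : e (j, b) = 1 := le_antisymm hle (Nat.one_le_iff_ne_zero.2 hb)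
    refine ⟨b, heb, fun b' hb' => ?_⟩
    by_contra hb'0
    have hsplit : e (j, b) + ∑ x ∈ Finset.univ.erase b, e (j, x) = ∑ x : Fin n, e (j, x) :=
      Finset.add_sum_erase Finset.univ (fun x => e (j, x)) (Finset.mem_univ b)
    have h2' : 1 ≤ ∑ x ∈ Finset.univ.erase b, e (j, x) :=
      le_trans (Nat.one_le_iff_ne_zero.2 hb'0)
        (Finset.single_le_sum (f := fun x => e (j, x)) (fun _ _ => Nat.zero_le _)
          (Finset.mem_erase.2 ⟨hb', Finset.mem_univ b'⟩))
    omega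
  choose f hf1 hf2 using key
  refine ⟨fun j => if hj : j ∈ A then f j hj else ⟨0, hn⟩, ?_⟩
  ext ⟨j, b⟩
  rw [myE_apply]
  by_cases hj : j ∈ A
  · simp only [hj, true_and, dif_pos]
    by_cases hb : f j hj = b
    · rw [if_pos hb, ← hb]; exact hf1 j hj
    · rw [if_neg hb]; exact hf2 j hj b (fun hx => hb hx.symm)
  · have h0 : ∑ b : Fin n, e (j, b) = 0 := by
      rw [← sigW_apply, h, tauF_apply, if_neg hj]
    rw [if_neg (fun hx => hj hx.1)]
    exact Finset.sum_eq_zero_iff.1 h0 b (Finset.mem_univ b)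

/-- degree of myE -/
lemma myE_degree (A : Finset (Fin m)) (c : Fin m → Fin n) :
    ((myE A c).sum fun _ t => t) = A.card := by
  classical
  induction A using Finset.induction with
  | empty => simp [myE]
  | @insert j A hj ih =>
    rw [myE, Finset.sum_insert hj, Finsupp.sum_add_index' (fun _ => rfl) (fun _ _ _ => rfl),
      ← myE, ih, Finsupp.sum_single_index rfl, Finset.card_insert_of_notMem hj, Nat.add_comm]


def psiH (g : Matrix (Fin n) (Fin n) k) (d : Fin m → Fin n) :
    MvPolynomial (Fin m × Fin n) k →ₐ[k] MvPolynomial (Fin m) k :=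
  aeval fun ic => C (g ic.2 (d ic.1)) * X ic.1

lemma psiH_monomial (g : Matrix (Fin n) (Fin n) k) (d : Fin m → Fin n)
    (e : (Fin m × Fin n) →₀ ℕ) (b : k) :
    psiH g d (monomial e b)
      = monomial (sigW e) (b * e.prod fun ic t => g ic.2 (d ic.1) ^ t) := by
  rw [psiH, aeval_monomial]
  have hsplit : (e.prod fun ic t => (C (g ic.2 (d ic.1)) * X ic.1) ^ t)
      = (C (e.prod fun ic t => g ic.2 (d ic.1) ^ t) : MvPolynomial (Fin m) k)
        * e.prod fun ic t => (X ic.1 : MvPolynomial (Fin m) k) ^ t := by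
    rw [Finsupp.prod, Finsupp.prod, Finsupp.prod,
      map_prod C (fun a => g a.2 (d a.1) ^ e a) e.support, ← Finset.prod_mul_distrib]
    exact Finset.prod_congr rfl fun ic _ => by rw [mul_pow, ← C_pow]
  have hX : (e.prod fun ic t => (X ic.1 : MvPolynomial (Fin m) k) ^ t)
      = monomial (sigW e) (1 : k) := by
    rw [monomial_eq, map_one, one_mul, sigW,
      Finsupp.prod_sum_index (fun i => pow_zero _) (fun i s t => pow_add _ _ _)]
    exact Finsupp.prod_congr fun ic _ =>
      (Finsupp.prod_single_index (h := fun i t => (X i : MvPolynomial (Fin m) k) ^ t)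
        (pow_zero _)).symm
  rw [hsplit, hX, algebraMap_eq, ← mul_assoc, ← C_mul, C_mul_monomial, mul_one]

lemma coeff_tauF_psiH (g : Matrix (Fin n) (Fin n) k) (d : Fin m → Fin n)
    (A : Finset (Fin m)) (p : MvPolynomial (Fin m × Fin n) k) :
    coeff (tauF A) (psiH g d p)
      = ∑ e ∈ p.support,
          (if sigW e = tauF A then coeff e p * (e.prod fun ic t => g ic.2 (d ic.1) ^ t)
           else 0) := by
  conv_lhs => rw [p.as_sum, map_sum, coeff_sum]
  refine Finset.sum_congr rfl fun e _ => ?_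
  rw [psiH_monomial, coeff_monomial]

lemma psiH_substAct (g : Matrix (Fin n) (Fin n) k) (d : Fin m → Fin n)
    (p : MvPolynomial (Fin m × Fin n) k) :
    psiH 1 d (substAct g p) = psiH g d p := by
  have : (psiH (1 : Matrix (Fin n) (Fin n) k) d).comp (substAct g) = psiH g d := by
    apply MvPolynomial.algHom_ext
    intro ic
    simp only [AlgHom.comp_apply, substAct, aeval_X, map_sum, psiH, map_mul, aeval_C,
      aeval_X, Matrix.one_apply, algebraMap_eq]
    simp only [apply_ite C, map_one, map_zero, ite_mul, one_mul, zero_mul, mul_ite,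
      mul_zero, mul_one]
    rw [Finset.sum_ite_eq' Finset.univ (d ic.1) (fun c => C (g ic.2 c) * X ic.1),
      if_pos (Finset.mem_univ _)]
  exact congrFun (congrArg DFunLike.coe this) p


variable [CharP k 2]

/-- the unipotent element of `O(n)` mixing `z` into the pair `u, w` -/
def mMat (a : k) (u w z : Fin n) : Matrix (Fin n) (Fin n) k :=
  1 + Matrix.single w u (a^2) + Matrix.single z u a

lemma mMat_mul_self (a : k) (u w z : Fin n) (huw : u ≠ w) (huz : u ≠ z) :
    mMat a u w z * mMat a u w z = 1 := by
  have h2 : ∀ X : Matrix (Fin n) (Fin n) k, X + X = 0 := by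
    intro X; ext i j
    simp [CharTwo.add_self_eq_zero]
  set B := Matrix.single w u (a^2) with hB
  set C := Matrix.single z u a with hC
  have hN2 : (B + C) * (B + C) = 0 := by
    rw [add_mul, mul_add, mul_add, hB, hC,
      Matrix.single_mul_single_of_ne (i := w) (j := u) (k := w) (c := a^2) (h := huw) (d := a^2),
      Matrix.single_mul_single_of_ne (i := w) (j := u) (k := z) (c := a^2) (h := huz) (d := a),
      Matrix.single_mul_single_of_ne (i := z) (j := u) (k := w) (c := a) (h := huw) (d := a^2),
      Matrix.single_mul_single_of_ne (i := z) (j := u) (k := z) (c := a) (h := huz) (d := a)]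
    simp
  have hre : mMat a u w z = 1 + (B + C) := by rw [mMat, add_assoc]
  have hexp : (1 + (B + C)) * (1 + (B + C)) = 1 + ((B + C) + (B + C)) + (B + C) * (B + C) := by
    noncomm_ring
  rw [hre, hexp, hN2, h2, add_zero, add_zero]

lemma mMat_mulVec (a : k) (u w z : Fin n) (v : Fin n → k) (j : Fin n) :
    (mMat a u w z).mulVec v j
      = v j + (if j = w then a^2 * v u else 0) + (if j = z then a * v u else 0) := by
  rw [mMat, Matrix.add_mulVec, Matrix.add_mulVec, Matrix.one_mulVec,
    Matrix.single_mulVec, Matrix.single_mulVec]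
  simp [Function.update_apply]

set_option maxHeartbeats 1000000 in
lemma mMat_inO (hodd : n % 2 = 1) (r₀ : ℕ) (hr : r₀ < n / 2) (u w z : Fin n)
    (hzval : z.1 = n - 1)
    (huw : (u.1 = 2*r₀ ∧ w.1 = 2*r₀+1) ∨ (u.1 = 2*r₀ + 1 ∧ w.1 = 2*r₀)) (a : k) :
    inO (mMat a u w z) := by
  have hn1 : n - 1 = 2 * (n / 2) := by omega
  have huval : u.1 < n - 1 := by omega
  have hwval : w.1 < n - 1 := by omega
  have huw' : u ≠ w := by
    intro h; rw [h] at huw; omega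
  have huz : u ≠ z := by
    intro h; rw [h, hzval] at huval; omega
  have hwz : w ≠ z := by
    intro h; rw [h, hzval] at hwval; omega
  constructor
  · exact IsUnit.of_mul_eq_one (mMat a u w z).det
      (by rw [← Matrix.det_mul, mMat_mul_self a u w z huw' huz, Matrix.det_one])
  · intro v
    obtain ⟨V, hV⟩ : ∃ V : Fin n → k, V = (mMat a u w z).mulVec v := ⟨_, rfl⟩
    rw [← hV]
    have hVj : ∀ j, V j = (v j + if j = w then a^2 * v u else 0) + if j = z then a * v u else 0 := by
      intro j; rw [hV, mMat_mulVec]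
    clear hV
    rw [stdQ, stdQ, dif_pos hodd, dif_pos hodd]
    have hzeq : (⟨n-1, by omega⟩ : Fin n) = z := Fin.ext hzval.symm
    rw [hzeq]
    have hVz : V z = v z + a * v u := by
      rw [hVj z, if_neg (Ne.symm hwz), if_pos rfl]
      ring
    set r₀' : Fin (n / 2) := ⟨r₀, hr⟩ with hr₀'
    have hpair : ∀ r : Fin (n / 2), r ≠ r₀' →
        V ⟨2*r.1, by have := r.2; omega⟩ * V ⟨2*r.1+1, by have := r.2; omega⟩
          = v ⟨2*r.1, by have := r.2; omega⟩ * v ⟨2*r.1+1, by have := r.2; omega⟩ := by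
      intro r hrne
      have hrv : r.1 ≠ r₀ := fun h => hrne (Fin.ext h)
      have hlt := r.2
      have h1 : (⟨2*r.1, by have := r.2; omega⟩ : Fin n) ≠ w := by
        intro h
        have hval : 2*r.1 = w.1 := congrArg Fin.val h
        omega
      have h2 : (⟨2*r.1+1, by have := r.2; omega⟩ : Fin n) ≠ w := by
        intro h
        have hval : 2*r.1+1 = w.1 := congrArg Fin.val h
        omega
      have h3 : (⟨2*r.1, by have := r.2; omega⟩ : Fin n) ≠ z := by
        intro h
        have hval : 2*r.1 = z.1 := congrArg Fin.val h
        omega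
      have h4 : (⟨2*r.1+1, by have := r.2; omega⟩ : Fin n) ≠ z := by
        intro h
        have hval : 2*r.1+1 = z.1 := congrArg Fin.val h
        omega
      rw [hVj, hVj, if_neg h1, if_neg h3, if_neg h2, if_neg h4]
      ring
    have hmain : V ⟨2*r₀'.1, by have := r₀'.2; omega⟩ * V ⟨2*r₀'.1+1, by have := r₀'.2; omega⟩
        = v ⟨2*r₀'.1, by have := r₀'.2; omega⟩ * v ⟨2*r₀'.1+1, by have := r₀'.2; omega⟩
          + (a * v u)^2 := by
      rcases huw with ⟨hu1, hw1⟩ | ⟨hu1, hw1⟩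
      · have e1 : (⟨2*r₀'.1, by have := r₀'.2; omega⟩ : Fin n) = u := by
          apply Fin.ext; show 2*r₀ = u.1; omega
        have e2 : (⟨2*r₀'.1+1, by have := r₀'.2; omega⟩ : Fin n) = w := by
          apply Fin.ext; show 2*r₀+1 = w.1; omega
        rw [e1, e2, hVj, hVj, if_neg huw', if_neg huz, if_pos rfl, if_neg hwz]
        ring
      · have e1 : (⟨2*r₀'.1, by have := r₀'.2; omega⟩ : Fin n) = w := by
          apply Fin.ext; show 2*r₀ = w.1; omega
        have e2 : (⟨2*r₀'.1+1, by have := r₀'.2; omega⟩ : Fin n) = u := by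
          apply Fin.ext; show 2*r₀+1 = u.1; omega
        rw [e1, e2, hVj, hVj, if_neg huw', if_neg huz, if_pos rfl, if_neg hwz]
        ring
    rw [← Finset.add_sum_erase _ _ (Finset.mem_univ r₀'),
      ← Finset.add_sum_erase _ (fun r : Fin (n/2) =>
        v ⟨2*r.1, by have := r.2; omega⟩ * v ⟨2*r.1+1, by have := r.2; omega⟩)
        (Finset.mem_univ r₀'),
      Finset.sum_congr rfl (fun r hr => hpair r (Finset.ne_of_mem_erase hr)), hmain,
      hVz, CharTwo.add_sq]
    linear_combination CharTwo.add_self_eq_zero ((a * v u)^2)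


lemma mMat_apply (a : k) (u w z p q : Fin n) :
    mMat a u w z p q = (if p = q then 1 else 0) + (if w = p ∧ u = q then a^2 else 0)
      + (if z = p ∧ u = q then a else 0) := by
  simp [mMat, Matrix.one_apply, Matrix.single]

lemma sum_coeff_ind (p : MvPolynomial (Fin m × Fin n) k) (E : (Fin m × Fin n) →₀ ℕ) :
    ∑ e ∈ p.support, coeff e p * (if e = E then 1 else 0) = coeff E p := by
  classical
  rw [Finset.sum_congr rfl (fun e _ => by rw [mul_ite, mul_one, mul_zero])]
  rw [Finset.sum_ite_eq' p.support E (fun e => coeff e p)]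
  by_cases h : E ∈ p.support
  · rw [if_pos h]
  · rw [if_neg h, ← MvPolynomial.notMem_support_iff.1 h]

theorem core (hodd : n % 2 = 1)
    (p : MvPolynomial (Fin m × Fin n) k)
    (hp : ∀ g : Matrix (Fin n) (Fin n) k, inO g → substAct g p = p)
    (t : k) (ht0 : t ≠ 0) (ht1 : t ≠ 1)
    (A : Finset (Fin m)) (c : Fin m → Fin n) (i₀ : Fin m) (hi₀ : i₀ ∈ A)
    (r₀ : ℕ) (hr : r₀ < n / 2) (u w : Fin n)
    (huw : (u.1 = 2*r₀ ∧ w.1 = 2*r₀+1) ∨ (u.1 = 2*r₀+1 ∧ w.1 = 2*r₀))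
    (hzv : (c i₀).1 = n - 1)
    (hu : ∀ i ∈ A, c i ≠ u) :
    coeff (myE A c) p = 0 := by
  classical
  have hn0 : 0 < n := by omega
  have hn1 : n - 1 = 2 * (n / 2) := by omega
  set z : Fin n := c i₀ with hzdef
  have huval : u.1 < n - 1 := by omega
  have hwval : w.1 < n - 1 := by omega
  have huw' : u ≠ w := by intro h; rw [h] at huw; omega
  have huz : u ≠ z := by intro h; rw [h, hzv] at huval; omega
  have hwz : w ≠ z := by intro h; rw [h, hzv] at hwval; omega
  set d : Fin m → Fin n := fun i => if i = i₀ then u else c i with hd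
  set dy : Fin m → Fin n := fun i => if i = i₀ then w else c i with hdy
  have hdi₀ : d i₀ = u := by rw [hd]; simp
  have hdyi₀ : dy i₀ = w := by rw [hdy]; simp
  have hdoff : ∀ i, i ≠ i₀ → d i = c i := by intro i hi; rw [hd]; simp [hi]
  have hdyoff : ∀ i, i ≠ i₀ → dy i = c i := by intro i hi; rw [hdy]; simp [hi]
  -- the three exponent vectors are distinct
  have hcd : myE A c ≠ myE A d := by
    intro h
    have h2 := myE_inj h i₀ hi₀
    rw [hdi₀] at h2
    exact huz h2.symm
  have hcdy : myE A c ≠ myE A dy := by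
    intro h
    have h2 := myE_inj h i₀ hi₀
    rw [hdyi₀] at h2
    exact hwz h2.symm
  have hddy : myE A d ≠ myE A dy := by
    intro h
    have h2 := myE_inj h i₀ hi₀
    rw [hdi₀, hdyi₀] at h2
    exact huw' h2
  -- main relation
  have hrel : ∀ a : k, a * coeff (myE A c) p + a^2 * coeff (myE A dy) p = 0 := by
    intro a
    have hO : inO (mMat a u w z) := mMat_inO hodd r₀ hr u w z hzv huw a
    have hinv : substAct (mMat a u w z) p = p := hp _ hO
    have h1 : coeff (tauF A) (psiH (mMat a u w z) d p) = coeff (tauF A) (psiH 1 d p) := by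
      rw [← psiH_substAct (mMat a u w z) d p, hinv]
    rw [coeff_tauF_psiH, coeff_tauF_psiH] at h1
    have hGM : ∀ e : (Fin m × Fin n) →₀ ℕ, sigW e = tauF A →
        (e.prod fun ic s => mMat a u w z ic.2 (d ic.1) ^ s)
          = (if e = myE A d then 1 else 0) + a * (if e = myE A c then 1 else 0)
            + a^2 * (if e = myE A dy then 1 else 0) := by
      intro e hsig
      obtain ⟨c', rfl⟩ := exists_c_of_sigW e A hsig hn0
      rw [myE_prod _ (fun x => pow_zero _) (fun x s s' => pow_add _ _ _)]
      have hstep : ∀ i ∈ A, (mMat a u w z (c' i) (d i)) ^ 1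
          = if i = i₀ then (if c' i₀ = u then 1 else if c' i₀ = w then a^2
              else if c' i₀ = z then a else 0)
            else (if c' i = c i then 1 else 0) := by
        intro i hi
        rw [pow_one, mMat_apply]
        by_cases hii : i = i₀
        · subst hii
          rw [if_pos rfl, hdi₀]
          by_cases h1' : c' i = u
          · rw [if_pos h1', if_pos h1',
              if_neg (fun hx => huw' (h1' ▸ hx.1).symm),
              if_neg (fun hx => huz (h1' ▸ hx.1).symm)]
            ring
          · rw [if_neg h1', if_neg h1']
            by_cases h2' : c' i = w
            · rw [if_pos h2', if_pos ⟨h2'.symm, rfl⟩,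
                if_neg (fun hx => hwz (h2' ▸ hx.1).symm)]
              ring
            · rw [if_neg h2', if_neg (fun hx => h2' hx.1.symm)]
              by_cases h3' : c' i = z
              · rw [if_pos h3', if_pos ⟨h3'.symm, rfl⟩]; ring
              · rw [if_neg h3', if_neg (fun hx => h3' hx.1.symm)]; ring
        · rw [if_neg hii, hdoff i hii]
          have hx2 : ¬(w = c' i ∧ u = c i) := fun hx => (hu i hi) hx.2.symm
          have hx3 : ¬(z = c' i ∧ u = c i) := fun hx => (hu i hi) hx.2.symm
          rw [if_neg hx2, if_neg hx3]
          split_ifs <;> ring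
      rw [Finset.prod_congr rfl hstep, ← Finset.mul_prod_erase A _ hi₀, if_pos rfl,
        Finset.prod_congr rfl (fun i hi => if_neg (Finset.mem_erase.1 hi).1)]
      by_cases hag : ∀ i ∈ A.erase i₀, c' i = c i
      · rw [Finset.prod_congr rfl (fun i hi => if_pos (hag i hi)), Finset.prod_const_one,
          mul_one]
        have hagA : ∀ i ∈ A, i ≠ i₀ → c' i = c i := fun i hi hne =>
          hag i (Finset.mem_erase.2 ⟨hne, hi⟩)
        by_cases h1' : c' i₀ = u
        · have hE : myE A c' = myE A d := myE_congr (fun i hi => by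
            by_cases hii : i = i₀
            · rw [hii, h1', hdi₀]
            · rw [hagA i hi hii, hdoff i hii])
          rw [hE, if_pos rfl, if_neg (Ne.symm hcd), if_neg hddy, if_pos h1']
          ring
        · by_cases h2' : c' i₀ = w
          · have hE : myE A c' = myE A dy := myE_congr (fun i hi => by
              by_cases hii : i = i₀
              · rw [hii, h2', hdyi₀]
              · rw [hagA i hi hii, hdyoff i hii])
            rw [hE, if_neg (Ne.symm hddy), if_neg (Ne.symm hcdy), if_pos rfl,
              if_neg h1', if_pos h2']
            ring
          · by_cases h3' : c' i₀ = z
            · have hE : myE A c' = myE A c := myE_congr (fun i hi => by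
                by_cases hii : i = i₀
                · rw [hii, h3']
                · rw [hagA i hi hii])
              rw [hE, if_neg hcd, if_pos rfl, if_neg hcdy, if_neg h1', if_neg h2',
                if_pos h3']
              ring
            · rw [if_neg (fun h => h1' ((myE_inj h i₀ hi₀).trans hdi₀)),
                if_neg (fun h => h3' (myE_inj h i₀ hi₀)),
                if_neg (fun h => h2' ((myE_inj h i₀ hi₀).trans hdyi₀)),
                if_neg h1', if_neg h2', if_neg h3']
              ring
      · push_neg at hag
        obtain ⟨i1, hi1, hne⟩ := hag
        have hi1A : i1 ∈ A := (Finset.mem_erase.1 hi1).2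
        have hi1ne : i1 ≠ i₀ := (Finset.mem_erase.1 hi1).1
        rw [Finset.prod_eq_zero hi1 (show (if c' i1 = c i1 then (1:k) else 0) = 0 from if_neg hne), mul_zero,
          if_neg (fun h => hne ((myE_inj h i1 hi1A).trans (hdoff i1 hi1ne))),
          if_neg (fun h => hne (myE_inj h i1 hi1A)),
          if_neg (fun h => hne ((myE_inj h i1 hi1A).trans (hdyoff i1 hi1ne)))]
        ring
    have hG1 : ∀ e : (Fin m × Fin n) →₀ ℕ, sigW e = tauF A →
        (e.prod fun ic s => (1 : Matrix (Fin n) (Fin n) k) ic.2 (d ic.1) ^ s)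
          = (if e = myE A d then 1 else 0) := by
      intro e hsig
      obtain ⟨c', rfl⟩ := exists_c_of_sigW e A hsig hn0
      rw [myE_prod _ (fun x => pow_zero _) (fun x s s' => pow_add _ _ _)]
      by_cases hall : ∀ i ∈ A, c' i = d i
      · rw [if_pos (myE_congr hall), Finset.prod_congr rfl
          (fun i hi => by rw [pow_one, Matrix.one_apply, if_pos (hall i hi)]),
          Finset.prod_const_one]
      · push_neg at hall
        obtain ⟨i1, hi1, hne⟩ := hall
        rw [if_neg (fun h => hne (myE_inj h i1 hi1)),
          Finset.prod_eq_zero hi1 (by rw [pow_one, Matrix.one_apply, if_neg hne])]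
    have hL : ∑ e ∈ p.support,
        (if sigW e = tauF A then
          coeff e p * (e.prod fun ic s => mMat a u w z ic.2 (d ic.1) ^ s) else 0)
        = coeff (myE A d) p + a * coeff (myE A c) p + a^2 * coeff (myE A dy) p := by
      have step : ∀ e ∈ p.support,
          (if sigW e = tauF A then
            coeff e p * (e.prod fun ic s => mMat a u w z ic.2 (d ic.1) ^ s) else 0)
          = coeff e p * (if e = myE A d then 1 else 0)
            + a * (coeff e p * (if e = myE A c then 1 else 0))
            + a^2 * (coeff e p * (if e = myE A dy then 1 else 0)) := by
        intro e he
        by_cases hsig : sigW e = tauF A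
        · rw [if_pos hsig, hGM e hsig]; ring
        · rw [if_neg hsig, if_neg (fun h => hsig (by rw [h]; exact sigW_myE A d)),
            if_neg (fun h => hsig (by rw [h]; exact sigW_myE A c)),
            if_neg (fun h => hsig (by rw [h]; exact sigW_myE A dy))]
          ring
      rw [Finset.sum_congr rfl step, Finset.sum_add_distrib, Finset.sum_add_distrib,
        ← Finset.mul_sum, ← Finset.mul_sum, sum_coeff_ind, sum_coeff_ind, sum_coeff_ind]
    have hR : ∑ e ∈ p.support,
        (if sigW e = tauF A then
          coeff e p * (e.prod fun ic s => (1 : Matrix (Fin n) (Fin n) k) ic.2 (d ic.1) ^ s)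
         else 0)
        = coeff (myE A d) p := by
      have step : ∀ e ∈ p.support,
          (if sigW e = tauF A then
            coeff e p * (e.prod fun ic s => (1 : Matrix (Fin n) (Fin n) k) ic.2 (d ic.1) ^ s)
           else 0)
          = coeff e p * (if e = myE A d then 1 else 0) := by
        intro e he
        by_cases hsig : sigW e = tauF A
        · rw [if_pos hsig, hG1 e hsig]
        · rw [if_neg hsig, if_neg (fun h => hsig (by rw [h]; exact sigW_myE A d))]
          ring
      rw [Finset.sum_congr rfl step, sum_coeff_ind]
    rw [hL, hR] at h1
    linear_combination h1
  -- extract from two values of a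
  have e1 := hrel 1
  have e2 := hrel t
  have hf1 : (t - t^2) * coeff (myE A c) p = 0 := by linear_combination e2 - t^2 * e1
  have htt : t - t^2 ≠ 0 := by
    intro h
    have h2 : t * (1 - t) = 0 := by linear_combination h
    rcases mul_eq_zero.1 h2 with h' | h'
    · exact ht0 h'
    · exact ht1 (by linear_combination -h')
  rcases mul_eq_zero.1 hf1 with h' | h'
  · exact absurd h' htt
  · exact h'


/-- number of x,y-slots of `A` -/
def wA (n : ℕ) (A : Finset (Fin m)) : ℕ :=
  (A.filter fun i : Fin m => i.1 < n - 1).card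

lemma card_filter_lt (t : ℕ) (h : t ≤ m) :
    ((Finset.univ : Finset (Fin m)).filter fun i : Fin m => i.1 < t).card = t := by
  classical
  have hb : ((Finset.univ : Finset (Fin m)).filter fun i : Fin m => i.1 < t).card
      = (Finset.univ : Finset (Fin t)).card := Finset.card_bij'
    (fun a ha => (⟨a.1, (Finset.mem_filter.1 ha).2⟩ : Fin t))
    (fun b _ => (⟨b.1, lt_of_lt_of_le b.2 h⟩ : Fin m))
    (fun a ha => Finset.mem_univ _)
    (fun b hb => Finset.mem_filter.2 ⟨Finset.mem_univ _, b.2⟩)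
    (fun a ha => rfl) (fun b hb => rfl)
  rw [hb, Finset.card_univ, Fintype.card_fin]

/-- the key multiplicity bound for generators -/
lemma key [CharP k 2] (hodd : n % 2 = 1) (hn3 : 3 ≤ n) (hm : n ≤ m)
    (c0 : Fin m → Fin n)
    (hc0a : ∀ i : Fin m, i.1 < n - 1 → (c0 i).1 = i.1)
    (hc0b : ∀ i : Fin m, ¬ i.1 < n - 1 → (c0 i).1 = n - 1)
    (t : k) (ht0 : t ≠ 0) (ht1 : t ≠ 1)
    (p : MvPolynomial (Fin m × Fin n) k)
    (hp : ∀ g : Matrix (Fin n) (Fin n) k, inO g → substAct g p = p)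
    (A : Finset (Fin m)) (hA : coeff (myE A c0) p ≠ 0) :
    min A.card (n - 1) ≤ wA n A := by
  classical
  by_contra hlt
  push_neg at hlt
  have hlt1 : wA n A < A.card := lt_of_lt_of_le hlt (min_le_left _ _)
  have hlt2 : wA n A < n - 1 := lt_of_lt_of_le hlt (min_le_right _ _)
  -- a z-slot inside A
  have hz : ∃ i₀ ∈ A, ¬ i₀.1 < n - 1 := by
    by_contra hno
    push_neg at hno
    have : A.filter (fun i : Fin m => i.1 < n - 1) = A :=
      Finset.filter_true_of_mem hno
    rw [wA, this] at hlt1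
    omega
  obtain ⟨i₀, hi₀, hi₀z⟩ := hz
  -- an x,y-slot outside A
  have hxy : ∃ i₁ : Fin m, i₁.1 < n - 1 ∧ i₁ ∉ A := by
    by_contra hno
    push_neg at hno
    have hsub : (Finset.univ.filter fun i : Fin m => i.1 < n - 1)
        ⊆ A.filter (fun i : Fin m => i.1 < n - 1) := by
      intro i hi
      rw [Finset.mem_filter] at hi ⊢
      exact ⟨hno i hi.2, hi.2⟩
    have hcard := Finset.card_le_card hsub
    rw [card_filter_lt (n-1) (by omega)] at hcard
    rw [wA] at hlt2
    omega
  obtain ⟨i₁, hi₁lt, hi₁A⟩ := hxy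
  have hn1 : n - 1 = 2 * (n / 2) := by omega
  -- choose the pair (u, w)
  rcases Nat.even_or_odd i₁.1 with ⟨r₀, hr₀⟩ | ⟨r₀, hr₀⟩
  · have hr : r₀ < n / 2 := by omega
    refine hA (core hodd p hp t ht0 ht1 A c0 i₀ hi₀ r₀ hr
      ⟨i₁.1, by omega⟩ ⟨i₁.1 + 1, by omega⟩ (Or.inl ⟨by simp; omega, by simp; omega⟩)
      (hc0b i₀ hi₀z) ?_)
    intro i hi hc
    have hval : (c0 i).1 = i₁.1 := congrArg Fin.val hc
    by_cases hilt : i.1 < n - 1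
    · rw [hc0a i hilt] at hval
      exact hi₁A (by rw [show i₁ = i from Fin.ext hval.symm]; exact hi)
    · rw [hc0b i hilt] at hval; omega
  · have hr : r₀ < n / 2 := by omega
    refine hA (core hodd p hp t ht0 ht1 A c0 i₀ hi₀ r₀ hr
      ⟨i₁.1, by omega⟩ ⟨i₁.1 - 1, by omega⟩ (Or.inr ⟨by simp; omega, by simp; omega⟩)
      (hc0b i₀ hi₀z) ?_)
    intro i hi hc
    have hval : (c0 i).1 = i₁.1 := congrArg Fin.val hc
    by_cases hilt : i.1 < n - 1
    · rw [hc0a i hilt] at hval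
      exact hi₁A (by rw [show i₁ = i from Fin.ext hval.symm]; exact hi)
    · rw [hc0b i hilt] at hval; omega

/-- splitting an exponent vector summing to a squarefree one -/
lemma antidiag_decomp (A : Finset (Fin m)) (c0 : Fin m → Fin n)
    (e₁ e₂ : (Fin m × Fin n) →₀ ℕ) (hsum : e₁ + e₂ = myE A c0) :
    ∃ B : Finset (Fin m), B ⊆ A ∧ e₁ = myE B c0 ∧ e₂ = myE (A \ B) c0 := by
  classical
  set B := A.filter (fun i => e₁ (i, c0 i) ≠ 0) with hB
  have hBA : B ⊆ A := Finset.filter_subset _ _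
  have happ : ∀ j b, e₁ (j, b) + e₂ (j, b) = myE A c0 (j, b) := by
    intro j b
    rw [← Finsupp.add_apply, hsum]
  refine ⟨B, hBA, ?_, ?_⟩
  · ext ⟨j, b⟩
    rw [myE_apply]
    have h := happ j b
    rw [myE_apply] at h
    by_cases hj : j ∈ A ∧ c0 j = b
    · rw [if_pos hj] at h
      by_cases hjB : j ∈ B
      · rw [if_pos ⟨hjB, hj.2⟩]
        have := (Finset.mem_filter.1 hjB).2
        rw [hj.2] at this
        omega
      · rw [if_neg (fun hx => hjB hx.1)]
        have : ¬ e₁ (j, c0 j) ≠ 0 := fun hx => hjB (Finset.mem_filter.2 ⟨hj.1, hx⟩)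
        rw [hj.2] at this
        omega
    · rw [if_neg hj] at h
      rw [if_neg (fun hx => hj ⟨hBA hx.1, hx.2⟩)]
      omega
  · ext ⟨j, b⟩
    rw [myE_apply]
    have h := happ j b
    rw [myE_apply] at h
    by_cases hj : j ∈ A ∧ c0 j = b
    · rw [if_pos hj] at h
      by_cases hjB : j ∈ B
      · rw [if_neg (fun hx => (Finset.mem_sdiff.1 hx.1).2 hjB)]
        have := (Finset.mem_filter.1 hjB).2
        rw [hj.2] at this
        omega
      · rw [if_pos ⟨Finset.mem_sdiff.2 ⟨hj.1, hjB⟩, hj.2⟩]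
        have : ¬ e₁ (j, c0 j) ≠ 0 := fun hx => hjB (Finset.mem_filter.2 ⟨hj.1, hx⟩)
        rw [hj.2] at this
        omega
    · rw [if_neg hj] at h
      rw [if_neg (fun hx => hj ⟨(Finset.mem_sdiff.1 hx.1).1, hx.2⟩)]
      omega

lemma wA_split (A B : Finset (Fin m)) (hBA : B ⊆ A) :
    wA n A = wA n B + wA n (A \ B) := by
  classical
  rw [wA, wA, wA, ← Finset.card_union_of_disjoint
    (Finset.disjoint_filter_filter Finset.disjoint_sdiff),
    ← Finset.filter_union, Finset.union_sdiff_of_subset hBA]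


end GHAux

open Classical in
theorem gh_indecomposable_SO_odd
    (k : Type*) [Field k] [IsAlgClosed k] [CharP k 2]
    (n m : ℕ) (hn : Odd n) (hn3 : 3 ≤ n) (hm : n ≤ m) :
    (∑ c ∈ (Finset.univ.filter fun c : Fin m → Fin n =>
        ∀ r < n / 2, Even (cnt c r) ∧ 1 ≤ cnt c r ∧ Alt c r),
      MvPolynomial.monomial (expOf c) (1 : k)) ∉
    Algebra.adjoin k {p : MvPolynomial (Fin m × Fin n) k |
      (∀ g : Matrix (Fin n) (Fin n) k, inO g → substAct g p = p) ∧
      p.totalDegree < m} := by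
  classical
  intro hmem
  have hodd : n % 2 = 1 := Nat.odd_iff.1 hn
  -- the distinguished letter assignment
  set c0 : Fin m → Fin n := fun i =>
    if h : i.1 < n - 1 then ⟨i.1, by omega⟩ else ⟨n-1, by omega⟩ with hc0
  have hc0a : ∀ i : Fin m, i.1 < n - 1 → (c0 i).1 = i.1 := by
    intro i h; rw [hc0]; simp [h]
  have hc0b : ∀ i : Fin m, ¬ i.1 < n - 1 → (c0 i).1 = n - 1 := by
    intro i h; rw [hc0]; simp [h]
  -- a scalar different from 0 and 1
  obtain ⟨t, ht⟩ := Infinite.exists_notMem_finset ({0, 1} : Finset k)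
  have ht0 : t ≠ 0 := fun h => ht (by rw [h]; simp)
  have ht1 : t ≠ 1 := fun h => ht (by rw [h]; simp)
  -- the inductive predicate
  have hPhi : ∀ A : Finset (Fin m),
      coeff (myE A c0) (∑ c ∈ (Finset.univ.filter fun c : Fin m → Fin n =>
        ∀ r < n / 2, Even (cnt c r) ∧ 1 ≤ cnt c r ∧ Alt c r),
          MvPolynomial.monomial (expOf c) (1 : k)) ≠ 0 →
      (min A.card (n - 1) ≤ wA n A ∧ A ≠ Finset.univ) := by
    refine Algebra.adjoin_induction ?_ ?_ ?_ ?_ hmem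
    · -- generators
      rintro x ⟨hinv, hdeg⟩ A hA
      constructor
      · exact key hodd hn3 hm c0 hc0a hc0b t ht0 ht1 x hinv A hA
      · rintro rfl
        have hs : myE (Finset.univ : Finset (Fin m)) c0 ∈ x.support :=
          MvPolynomial.mem_support_iff.2 hA
        have hdeg2 := MvPolynomial.le_totalDegree hs
        rw [myE_degree, Finset.card_univ, Fintype.card_fin] at hdeg2
        omega
    · -- algebraMap
      intro r A hA
      have hAe : A = ∅ := by
        by_contra hne
        obtain ⟨i, hi⟩ := Finset.nonempty_iff_ne_empty.2 hne
        have h1 : myE A c0 (i, c0 i) = 1 := by rw [myE_apply, if_pos ⟨hi, rfl⟩]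
        have h0 : myE A c0 ≠ 0 := fun hz => by rw [hz] at h1; simp at h1
        rw [algebraMap_eq, MvPolynomial.coeff_C, if_neg (fun hx => h0 hx.symm)] at hA
        exact hA rfl
      subst hAe
      refine ⟨by simp, ?_⟩
      intro h
      have hne : (Finset.univ : Finset (Fin m)).Nonempty := ⟨⟨0, by omega⟩, Finset.mem_univ _⟩
      rw [← h] at hne
      exact Finset.not_nonempty_empty hne
    · -- addition
      intro x y hx hy px py A hA
      by_cases h1 : coeff (myE A c0) x = 0
      · refine py A (fun h2 => hA ?_)
        rw [MvPolynomial.coeff_add, h1, h2, add_zero]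
      · exact px A h1
    · -- multiplication
      intro x y hx hy px py A hA
      rw [MvPolynomial.coeff_mul] at hA
      obtain ⟨⟨e₁, e₂⟩, hmem', hne⟩ := Finset.exists_ne_zero_of_sum_ne_zero hA
      have hsum : e₁ + e₂ = myE A c0 := Finset.HasAntidiagonal.mem_antidiagonal.1 hmem'
      obtain ⟨B, hBA, hB1, hB2⟩ := antidiag_decomp A c0 e₁ e₂ hsum
      have hx0 : coeff (myE B c0) x ≠ 0 := by
        rw [← hB1]; exact fun h => hne (by rw [h, zero_mul])
      have hy0 : coeff (myE (A \ B) c0) y ≠ 0 := by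
        rw [← hB2]; exact fun h => hne (by rw [h, mul_zero])
      obtain ⟨hminB, hneB⟩ := px B hx0
      obtain ⟨hminB', hneB'⟩ := py (A \ B) hy0
      have hcard : (A \ B).card + B.card = A.card := Finset.card_sdiff_add_card_eq_card hBA
      have hAcard : A.card ≤ m := by
        have := Finset.card_le_card (Finset.subset_univ A)
        rwa [Finset.card_univ, Fintype.card_fin] at this
      have hw := wA_split (n := n) A B hBA
      constructor
      · omega
      · rintro rfl
        have hwuniv : wA n (Finset.univ : Finset (Fin m)) = n - 1 :=
          card_filter_lt (n-1) (by omega)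
        have hBne : B.Nonempty := by
          rw [Finset.nonempty_iff_ne_empty]
          rintro rfl
          exact hneB' (by simp)
        have h1B : 1 ≤ B.card := Finset.card_pos.2 hBne
        have hBcard : B.card < m := by
          have hss : B ⊂ Finset.univ := Finset.ssubset_iff_subset_ne.2 ⟨hBA, hneB⟩
          have := Finset.card_lt_card hss
          rwa [Finset.card_univ, Fintype.card_fin] at this
        rw [Finset.card_univ, Fintype.card_fin] at hcard
        omega
  -- compute the coefficient of the leading monomial in the sum
  have hc0mem : c0 ∈ (Finset.univ.filter fun c : Fin m → Fin n =>
      ∀ r < n / 2, Even (cnt c r) ∧ 1 ≤ cnt c r ∧ Alt c r) := by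
    rw [Finset.mem_filter]
    refine ⟨Finset.mem_univ _, ?_⟩
    intro r hr
    have hcnt : cnt c0 r = 2 := by
      have hab : (Finset.univ.filter fun i : Fin m => (c0 i).1 / 2 = r)
          = {(⟨2*r, by omega⟩ : Fin m), (⟨2*r+1, by omega⟩ : Fin m)} := by
        ext i
        simp only [Finset.mem_filter, Finset.mem_univ, true_and, Finset.mem_insert,
          Finset.mem_singleton]
        constructor
        · intro hpred
          by_cases hilt : i.1 < n - 1
          · rw [hc0a i hilt] at hpred
            have : i.1 = 2*r ∨ i.1 = 2*r+1 := by omega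
            rcases this with h | h
            · exact Or.inl (Fin.ext h)
            · exact Or.inr (Fin.ext h)
          · rw [hc0b i hilt] at hpred
            exfalso; omega
        · rintro (rfl | rfl)
          · rw [hc0a _ (by show 2*r < n - 1; omega)]
            show 2*r/2 = r
            omega
          · rw [hc0a _ (by show 2*r+1 < n - 1; omega)]
            show (2*r+1)/2 = r
            omega
      rw [cnt, hab, Finset.card_insert_of_notMem (by
        rw [Finset.mem_singleton]
        intro h
        have := congrArg Fin.val h
        simp at this), Finset.card_singleton]
    refine ⟨hcnt ▸ (by decide : Even 2), hcnt ▸ (by omega : 1 ≤ 2), ?_⟩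
    intro i j hij h1 h2 _ heq
    by_cases hilt : i.1 < n - 1
    · by_cases hjlt : j.1 < n - 1
      · have hvi := hc0a i hilt
        have hvj := hc0a j hjlt
        have := congrArg Fin.val heq
        rw [hvi, hvj] at this
        have : i.1 < j.1 := hij
        omega
      · rw [hc0b j hjlt] at h2; omega
    · rw [hc0b i hilt] at h1; omega
  have hcoeff : coeff (myE (Finset.univ : Finset (Fin m)) c0)
      (∑ c ∈ (Finset.univ.filter fun c : Fin m → Fin n =>
        ∀ r < n / 2, Even (cnt c r) ∧ 1 ≤ cnt c r ∧ Alt c r),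
          MvPolynomial.monomial (expOf c) (1 : k)) = 1 := by
    rw [MvPolynomial.coeff_sum]
    have hstep : ∀ c ∈ (Finset.univ.filter fun c : Fin m → Fin n =>
        ∀ r < n / 2, Even (cnt c r) ∧ 1 ≤ cnt c r ∧ Alt c r),
        coeff (myE (Finset.univ : Finset (Fin m)) c0) (MvPolynomial.monomial (expOf c) (1:k))
          = if c = c0 then 1 else 0 := by
      intro c _
      rw [MvPolynomial.coeff_monomial]
      have hexp : expOf c = myE (Finset.univ : Finset (Fin m)) c := rfl
      by_cases hc : c = c0
      · rw [if_pos hc, if_pos (hc ▸ hexp)]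
      · rw [if_neg hc, if_neg (fun h => hc (funext (fun i =>
          myE_inj (hexp.symm.trans h) i (Finset.mem_univ i))))]
    rw [Finset.sum_congr rfl hstep, Finset.sum_ite_eq' _ c0 (fun _ => (1:k)),
      if_pos hc0mem]
  obtain ⟨-, hneuniv⟩ := hPhi Finset.univ (by rw [hcoeff]; exact one_ne_zero)
  exact hneuniv rfl
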